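/- Let f : E × E → ℝ be differentiable with gradient Lipschitz with constant L_f. For iterates V, V⁺, U, U⁻, U⁺ and extrapolated points V̄⁺ = V⁺ + α(V⁺ − V), Ū = U + β(U − U⁻), the quantity R := f(V̄⁺, U) − f(V⁺, Ū) + f(V, Ū) − f(V, U) + f(V⁺, U⁺) − f(V̄⁺, U⁺) satisfies R ≤ 2α²L_f‖V⁺ − V‖² + αL_f‖V⁺ − V‖·‖U⁺ − U‖ + βL_f‖V⁺ − V‖·‖U − U⁻‖ + 2β²L_f‖U − U⁻‖². -/

import Mathlib

lemma diff_diff_le {F : Type*} [NormedAddCommGroup F] [NormedSpace ℝ F]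
    (g : F → ℝ) (L : ℝ) (hL : 0 ≤ L) (hdiff : Differentiable ℝ g)
    (hlip : LipschitzWith (Real.toNNReal L) (fderiv ℝ g)) (x y h : F) :
    g (x + h) - g x - (g (y + h) - g y) ≤ L * ‖x - y‖ * ‖h‖ := by
  set G : F → ℝ := fun z => g (z + h) - g z with hG
  have hGdiff : Differentiable ℝ G :=
    (hdiff.comp (differentiable_id.add_const h)).sub hdiff
  have hfd : ∀ z : F, fderiv ℝ G z = fderiv ℝ g (z + h) - fderiv ℝ g z := by
    intro z
    have h1 : HasFDerivAt (fun z : F => g (z + h)) (fderiv ℝ g (z + h)) z := by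
      simpa [Function.comp_def] using (hdiff (z + h)).hasFDerivAt.comp z ((hasFDerivAt_id z).add_const h)
    exact (h1.sub (hdiff z).hasFDerivAt).fderiv
  have hbound : ∀ z : F, ‖fderiv ℝ G z‖ ≤ L * ‖h‖ := by
    intro z
    rw [hfd z]
    have := hlip.dist_le_mul (z + h) z
    rw [dist_eq_norm, dist_eq_norm] at this
    simpa [Real.coe_toNNReal _ hL] using this
  have key : ‖G x - G y‖ ≤ L * ‖h‖ * ‖x - y‖ := by
    have := Convex.norm_image_sub_le_of_norm_fderiv_le (s := Set.univ) (C := L * ‖h‖)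
      (fun z _ => hGdiff z) (fun z _ => hbound z) convex_univ (Set.mem_univ y) (Set.mem_univ x)
    simpa using this
  calc g (x + h) - g x - (g (y + h) - g y) = G x - G y := by simp [hG]
    _ ≤ ‖G x - G y‖ := le_abs_self _
    _ ≤ L * ‖h‖ * ‖x - y‖ := key
    _ = L * ‖x - y‖ * ‖h‖ := by ring

theorem extrapolation_error_bound
    {E : Type*} [NormedAddCommGroup E] [InnerProductSpace ℝ E] [FiniteDimensional ℝ E]
    (f : E × E → ℝ) (Lf : ℝ) (hLf : 0 ≤ Lf)
    (hdiff : Differentiable ℝ f)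
    (hlip : LipschitzWith (Real.toNNReal Lf) (fderiv ℝ f))
    (α β : ℝ) (hα : 0 ≤ α) (hβ : 0 ≤ β)
    (V Vp U Um Up : E) :
    f (Vp + α • (Vp - V), U) - f (Vp, U + β • (U - Um)) +
        f (V, U + β • (U - Um)) - f (V, U) +
        f (Vp, Up) - f (Vp + α • (Vp - V), Up) ≤
      2 * α ^ 2 * Lf * ‖Vp - V‖ ^ 2 + α * Lf * ‖Vp - V‖ * ‖Up - U‖ +
        β * Lf * ‖Vp - V‖ * ‖U - Um‖ + 2 * β ^ 2 * Lf * ‖U - Um‖ ^ 2 := by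
  have hA := diff_diff_le f Lf hLf hdiff hlip (Vp, U) (Vp, Up) (α • (Vp - V), 0)
  have hB := diff_diff_le f Lf hLf hdiff hlip (Vp, U + β • (U - Um)) (V, U + β • (U - Um))
    (0, -(β • (U - Um)))
  simp only [Prod.mk_add_mk, Prod.mk_sub_mk, add_zero, sub_self, add_neg_cancel_right,
    Prod.norm_def, norm_zero, norm_smul, Real.norm_eq_abs, abs_of_nonneg hα, abs_of_nonneg hβ,
    norm_neg] at hA hB
  rw [max_comm, max_eq_left (norm_nonneg _), max_eq_left (by positivity : (0:ℝ) ≤ α * ‖Vp - V‖)] at hA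
  rw [max_eq_left (norm_nonneg _), max_comm, max_eq_left (by positivity)] at hB
  rw [norm_sub_rev U Up] at hA
  have s1 : 0 ≤ 2 * α ^ 2 * Lf * ‖Vp - V‖ ^ 2 := by positivity
  have s2 : 0 ≤ 2 * β ^ 2 * Lf * ‖U - Um‖ ^ 2 := by positivity
  linarith
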